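/- As r → ∞, the real part of the winding number of the upper semicircular arc part_circlepath z r 0 π about any fixed point z₀ tends to 1/2. -/

import Mathlib

open Complex Filter Topology Polynomial Set

/-- The winding number of a path `γ : [0,1] → ℂ` about `z`,
`(1/(2πi)) ∮_γ dw/(w - z)`. -/
noncomputable def windingNumber (γ : ℝ → ℂ) (z : ℂ) : ℂ :=
  (1 / (2 * Real.pi * Complex.I)) * ∫ t in (0:ℝ)..1, deriv γ t / (γ t - z)

/-- The straight-line path from `a` to `b`. -/
noncomputable def linepath (a b : ℂ) : ℝ → ℂ := fun t => (1 - (t : ℂ)) * a + (t : ℂ) * b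

/-- The circular-arc path `t ↦ z + r·exp(i·((1-t)·st + t·tt))`. -/
noncomputable def partCirclepath (z : ℂ) (r st tt : ℝ) : ℝ → ℂ :=
  fun t => z + (r : ℂ) * Complex.exp (Complex.I * (((1 - t) * st + t * tt : ℝ) : ℂ))

lemma pcp_eq (z : ℂ) (r : ℝ) :
    partCirclepath z r 0 Real.pi
      = fun t : ℝ => z + (r:ℂ) * Complex.exp (Complex.I * ((t * Real.pi : ℝ) : ℂ)) := by
  funext t
  simp only [partCirclepath]
  norm_num

lemma pcp_hasDerivAt (z : ℂ) (r t : ℝ) :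
    HasDerivAt (partCirclepath z r 0 Real.pi)
      ((r:ℂ) * (Complex.exp (Complex.I * ((t * Real.pi : ℝ) : ℂ)) * (Complex.I * Real.pi))) t := by
  rw [pcp_eq]
  have h1 : HasDerivAt (fun t : ℝ => t * Real.pi) Real.pi t := by
    simpa using (hasDerivAt_id t).mul_const Real.pi
  exact ((h1.ofReal_comp.const_mul Complex.I).cexp.const_mul (r:ℂ)).const_add z

lemma abs_e (t : ℝ) : ‖Complex.exp (Complex.I * ((t * Real.pi : ℝ) : ℂ))‖ = 1 := by
  rw [Complex.norm_exp]; simp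

theorem Re_winding_number_tendsto_part_circlepath (z z₀ : ℂ) :
    Tendsto (fun r : ℝ => (windingNumber (partCirclepath z r 0 Real.pi) z₀).re)
      atTop (𝓝 (1/2)) := by
  set c : ℂ := z - z₀ with hc
  set e : ℝ → ℂ := fun t => Complex.exp (Complex.I * ((t * Real.pi : ℝ) : ℂ)) with he
  have he_ne : ∀ t, e t ≠ 0 := fun t => Complex.exp_ne_zero _
  have habs : ∀ t, ‖e t‖ = 1 := abs_e
  set F : ℝ → ℝ → ℂ := fun r t => (r:ℂ) * (e t * (Complex.I * Real.pi)) / (c + r * e t) with hF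
  -- the winding number rewritten
  have hW : ∀ r : ℝ, windingNumber (partCirclepath z r 0 Real.pi) z₀
      = (1 / (2 * Real.pi * Complex.I)) * ∫ t in (0:ℝ)..1, F r t := by
    intro r
    unfold windingNumber
    congr 1
    apply intervalIntegral.integral_congr
    intro t _
    show deriv (partCirclepath z r 0 Real.pi) t / (partCirclepath z r 0 Real.pi t - z₀) = F r t
    rw [(pcp_hasDerivAt z r t).deriv, pcp_eq]
    have : z + (r:ℂ) * e t - z₀ = c + r * e t := by rw [hc]; ring
    simp only [he, hF]
    rw [← this]
  -- denominator bound for large r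
  have hden : ∀ r : ℝ, 2 * ‖c‖ + 1 ≤ r → ∀ t : ℝ,
      r / 2 ≤ ‖c + r * e t‖ := by
    intro r hr t
    have hr0 : 0 ≤ r := le_trans (by positivity) hr
    have h1 : ‖(r:ℂ) * e t‖ = r := by
      rw [norm_mul, habs, Complex.norm_real, Real.norm_eq_abs, _root_.abs_of_nonneg hr0, mul_one]
    have h2 : ‖(r:ℂ) * e t‖ ≤ ‖c + r * e t‖ + ‖c‖ := by
      calc ‖(r:ℂ) * e t‖ = ‖(c + r * e t) + (-c)‖ := by ring_nf
        _ ≤ ‖c + r * e t‖ + ‖-c‖ := norm_add_le _ _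
        _ = ‖c + r * e t‖ + ‖c‖ := by rw [norm_neg]
    rw [h1] at h2
    linarith
  -- the integral tendsto
  have hint : Tendsto (fun r : ℝ => ∫ t in (0:ℝ)..1, F r t) atTop
      (𝓝 (∫ t in (0:ℝ)..1, (Complex.I * Real.pi : ℂ))) := by
    apply intervalIntegral.tendsto_integral_filter_of_dominated_convergence
      (bound := fun _ => 2 * Real.pi)
    · filter_upwards [eventually_ge_atTop (2 * ‖c‖ + 1)] with r hr
      have hcont : Continuous (F r) := by
        apply Continuous.div
        · fun_prop
        · fun_prop
        · intro t
          intro h0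
          have := hden r hr t
          rw [h0] at this
          simp at this
          nlinarith [Real.pi_nonneg, norm_nonneg c]
      exact hcont.aestronglyMeasurable
    · filter_upwards [eventually_ge_atTop (2 * ‖c‖ + 1)] with r hr
      refine Filter.Eventually.of_forall fun t _ => ?_
      have hr0 : (0:ℝ) ≤ r := le_trans (by positivity) hr
      have hd := hden r hr t
      have hr2 : (0:ℝ) < r / 2 := by nlinarith [norm_nonneg c]
      have hnum : ‖(r:ℂ) * (e t * (Complex.I * Real.pi))‖ = r * Real.pi := by
        rw [norm_mul, norm_mul, norm_mul, habs, Complex.norm_real, Real.norm_eq_abs, Complex.norm_I,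
          Complex.norm_real, Real.norm_eq_abs, _root_.abs_of_nonneg hr0, _root_.abs_of_nonneg Real.pi_nonneg]
        ring
      have : ‖F r t‖ = r * Real.pi / ‖c + r * e t‖ := by
        simp only [hF, norm_div, hnum]
      rw [this]
      calc r * Real.pi / ‖c + r * e t‖
          ≤ r * Real.pi / (r / 2) := by
            apply div_le_div_of_nonneg_left (by positivity) hr2 hd
        _ = 2 * Real.pi := by
            have hrpos : (0:ℝ) < r := lt_of_lt_of_le (by positivity) hr
            field_simp
    · exact intervalIntegrable_const
    · refine Filter.Eventually.of_forall fun t _ => ?_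
      -- pointwise limit
      have key : (fun r : ℝ => F r t)
          =ᶠ[atTop] fun r => Complex.I * Real.pi * (c / ((r:ℂ) * e t) + 1)⁻¹ := by
        filter_upwards [eventually_gt_atTop (0:ℝ)] with r hr
        have hre : (r:ℂ) * e t ≠ 0 := by
          exact mul_ne_zero (by exact_mod_cast hr.ne') (he_ne t)
        have h1 : c / ((r:ℂ) * e t) + 1 = (c + r * e t) / ((r:ℂ) * e t) := by
          rw [div_add_one hre]
        rw [h1, inv_div]
        simp only [hF]
        ring
      have h0 : Tendsto (fun r : ℝ => c / ((r:ℂ) * e t)) atTop (𝓝 0) := by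
        have h1 : Tendsto (fun r : ℝ => ((r:ℂ))⁻¹) atTop (𝓝 0) := by
          have := (Complex.continuous_ofReal.tendsto 0).comp tendsto_inv_atTop_zero
          simpa [Function.comp_def, Complex.ofReal_inv] using this
        have h2 := h1.const_mul (c / e t)
        rw [mul_zero] at h2
        apply h2.congr
        intro r
        ring
      have h3 : Tendsto (fun r : ℝ => Complex.I * Real.pi * (c / ((r:ℂ) * e t) + 1)⁻¹)
          atTop (𝓝 (Complex.I * Real.pi * ((0:ℂ) + 1)⁻¹)) := by
        apply Tendsto.const_mul
        exact ((h0.add tendsto_const_nhds).inv₀ (by norm_num))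
      apply Tendsto.congr' key.symm
      simpa using h3
  have hconst : (∫ t in (0:ℝ)..1, (Complex.I * Real.pi : ℂ)) = Complex.I * Real.pi := by
    simp
  rw [hconst] at hint
  have hfull : Tendsto (fun r : ℝ => windingNumber (partCirclepath z r 0 Real.pi) z₀)
      atTop (𝓝 (1/2 : ℂ)) := by
    have := hint.const_mul (1 / (2 * Real.pi * Complex.I))
    have heq : (1 / (2 * (Real.pi:ℂ) * Complex.I)) * (Complex.I * Real.pi) = 1/2 := by
      have hpi : (Real.pi : ℂ) ≠ 0 := by exact_mod_cast Real.pi_ne_zero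
      field_simp
    rw [heq] at this
    apply this.congr
    intro r
    rw [hW r]
  have := (Complex.continuous_re.tendsto _).comp hfull
  simpa [Function.comp_def] using this
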